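/- Let t and x be real numbers with 0 < t ≤ 1 and 0 < x < 1. Then ∑_{n=1}^{∞} t^n sin(2πnx)/n = arctan( t sin(2πx) / (1 − t cos(2πx)) ). -/

import Mathlib

open Filter Finset Real

private lemma arg_eq_arctan_aux {z : ℂ} (hre : 0 < z.re) :
    Complex.arg z = Real.arctan (z.im / z.re) := by
  have habs := Complex.abs_arg_lt_pi_div_two_iff.mpr (Or.inl hre)
  rw [← Complex.tan_arg, Real.arctan_tan]
  · linarith [(abs_lt.mp habs).1]
  · exact (abs_lt.mp habs).2

/-- Core identity for `|t| < 1`. -/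
private lemma hasSum_sin_arctan {t θ : ℝ} (ht : |t| < 1) :
    HasSum (fun n : ℕ => t ^ n * Real.sin (n * θ) / n)
      (Real.arctan (t * Real.sin θ / (1 - t * Real.cos θ))) := by
  set z : ℂ := (t : ℂ) * Complex.exp (θ * Complex.I) with hzdef
  have hz : ‖z‖ < 1 := by
    rw [hzdef, norm_mul, Complex.norm_real, Real.norm_eq_abs,
      Complex.norm_exp_ofReal_mul_I, mul_one]
    exact ht
  have h := Complex.hasSum_taylorSeries_neg_log hz
  have him := ((Complex.hasSum_iff _ _).mp h).2
  have hterm : ∀ n : ℕ, (z ^ n / n : ℂ).im = t ^ n * Real.sin (n * θ) / n := by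
    intro n
    have hzn : z ^ n = ((t ^ n : ℝ) : ℂ) * Complex.exp ((((n : ℝ) * θ : ℝ)) * Complex.I) := by
      rw [hzdef, mul_pow, ← Complex.exp_nat_mul, Complex.ofReal_pow]
      congr 1
      push_cast
      ring
    have hn : ((n : ℂ)) = ((n : ℝ) : ℂ) := by push_cast; ring
    rw [hzn, hn, Complex.div_ofReal_im, Complex.mul_im, Complex.exp_ofReal_mul_I_im,
      Complex.exp_ofReal_mul_I_re, Complex.ofReal_re, Complex.ofReal_im]
    ring
  have hre : (1 - z).re = 1 - t * Real.cos θ := by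
    simp [hzdef, Complex.exp_ofReal_mul_I_re]
  have him1 : (1 - z).im = -(t * Real.sin θ) := by
    simp [hzdef, Complex.exp_ofReal_mul_I_im]
  have hrepos : 0 < (1 - z).re := by
    rw [hre]
    have habs : |t * Real.cos θ| < 1 := by
      calc |t * Real.cos θ| = |t| * |Real.cos θ| := abs_mul _ _
        _ ≤ |t| * 1 := mul_le_mul_of_nonneg_left (Real.abs_cos_le_one θ) (abs_nonneg t)
        _ < 1 := by rw [mul_one]; exact ht
    have h1 := (abs_lt.mp habs).2
    linarith
  have hlog : (-Complex.log (1 - z)).im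
      = Real.arctan (t * Real.sin θ / (1 - t * Real.cos θ)) := by
    rw [Complex.neg_im, Complex.log_im, arg_eq_arctan_aux hrepos, hre, him1,
      ← Real.arctan_neg]
    ring_nf
  rw [← hlog]
  exact him.congr_fun fun n => (hterm n).symm

private lemma partial_sum_eq (t θ : ℝ) (N : ℕ) :
    ∑ n ∈ Finset.range N, t ^ (n + 1) * Real.sin ((n + 1) * θ) / (n + 1)
      = ∑ n ∈ Finset.range (N + 1), t ^ n * Real.sin (n * θ) / n := by
  rw [Finset.sum_range_succ']
  simp

/-- Convergence of the partial sums at `t = 1`. -/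
private lemma cauchy_at_one {θ : ℝ} (hθ : Complex.exp (θ * Complex.I) ≠ 1) :
    CauchySeq (fun N => ∑ n ∈ Finset.range N, Real.sin ((n + 1) * θ) / (n + 1)) := by
  set w : ℂ := Complex.exp (θ * Complex.I) with hw
  have hw1 : ‖w‖ = 1 := by
    rw [hw, Complex.norm_exp_ofReal_mul_I]
  have hwne : (0 : ℝ) < ‖w - 1‖ := by
    rw [norm_pos_iff, sub_ne_zero]
    exact hθ
  have hb : ∀ n : ℕ, ‖∑ i ∈ Finset.range n, Real.sin (((i : ℝ) + 1) * θ)‖ ≤ 2 / ‖w - 1‖ := by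
    intro n
    have hsum : ∑ i ∈ Finset.range n, Real.sin (((i : ℝ) + 1) * θ)
        = (∑ i ∈ Finset.range n, w ^ (i + 1)).im := by
      rw [Complex.im_sum]
      refine Finset.sum_congr rfl fun i _ => ?_
      rw [hw, ← Complex.exp_nat_mul]
      rw [show ((i + 1 : ℕ) : ℂ) * (θ * Complex.I)
          = ((((i : ℝ) + 1) * θ : ℝ) : ℂ) * Complex.I by push_cast; ring]
      rw [Complex.exp_ofReal_mul_I_im]
    have hwsum : ∑ i ∈ Finset.range n, w ^ (i + 1) = w * ((w ^ n - 1) / (w - 1)) := by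
      rw [← geom_sum_eq hθ, Finset.mul_sum]
      exact Finset.sum_congr rfl fun i _ => by ring
    have hnorm : ‖∑ i ∈ Finset.range n, w ^ (i + 1)‖ ≤ 2 / ‖w - 1‖ := by
      rw [hwsum, norm_mul, hw1, one_mul, norm_div]
      have h2 : ‖w ^ n - 1‖ ≤ 2 := by
        calc ‖w ^ n - 1‖ ≤ ‖w ^ n‖ + ‖(1 : ℂ)‖ := norm_sub_le _ _
          _ = 2 := by rw [norm_pow, hw1]; norm_num
      gcongr
    calc ‖∑ i ∈ Finset.range n, Real.sin (((i : ℝ) + 1) * θ)‖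
        = |(∑ i ∈ Finset.range n, w ^ (i + 1)).im| := by rw [hsum]; rfl
      _ ≤ ‖∑ i ∈ Finset.range n, w ^ (i + 1)‖ := Complex.abs_im_le_norm _
      _ ≤ 2 / ‖w - 1‖ := hnorm
  have hanti : Antitone (fun n : ℕ => ((n : ℝ) + 1)⁻¹) := by
    intro a b hab
    have : ((a : ℝ) + 1) ≤ ((b : ℝ) + 1) := by
      have : (a : ℝ) ≤ b := Nat.cast_le.mpr hab
      linarith
    exact inv_anti₀ (by positivity) this
  have h0 : Tendsto (fun n : ℕ => ((n : ℝ) + 1)⁻¹) atTop (nhds 0) :=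
    tendsto_one_div_add_atTop_nhds_zero_nat.congr (fun n => by rw [one_div])
  have hC := hanti.cauchySeq_series_mul_of_tendsto_zero_of_bounded h0 hb
  have heq : (fun n => ∑ i ∈ Finset.range n,
        ((i : ℝ) + 1)⁻¹ • Real.sin (((i : ℝ) + 1) * θ))
      = fun N => ∑ n ∈ Finset.range N, Real.sin ((n + 1) * θ) / (n + 1) := by
    funext N
    refine Finset.sum_congr rfl fun i _ => ?_
    rw [smul_eq_mul]
    push_cast
    ring
  rwa [heq] at hC

theorem abel_sum_sin_eq_arctan (t x : ℝ) (ht0 : 0 < t) (ht1 : t ≤ 1)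
    (hx0 : 0 < x) (hx1 : x < 1) :
    Filter.Tendsto
      (fun N => ∑ n ∈ Finset.range N,
        t ^ (n + 1) * Real.sin (2 * Real.pi * (n + 1) * x) / (n + 1))
      Filter.atTop
      (nhds (Real.arctan (t * Real.sin (2 * Real.pi * x)
        / (1 - t * Real.cos (2 * Real.pi * x))))) := by
  have hπ := Real.pi_pos
  set θ : ℝ := 2 * Real.pi * x with hθdef
  have hsin : ∀ n : ℕ, Real.sin (2 * Real.pi * (↑n + 1) * x) = Real.sin ((↑n + 1) * θ) := by
    intro n; congr 1; rw [hθdef]; ring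
  have hcosθ : Real.cos θ < 1 := by
    refine lt_of_le_of_ne (Real.cos_le_one θ) fun h => ?_
    obtain ⟨n, hn⟩ := (Real.cos_eq_one_iff θ).mp h
    have hxn : (n : ℝ) = x := by
      rw [hθdef] at hn
      have h2 : (n : ℝ) * (2 * Real.pi) = x * (2 * Real.pi) := by linarith [hn]
      exact mul_right_cancel₀ (by positivity) h2
    have h0 : (0 : ℝ) < n := by rw [hxn]; exact hx0
    have h1 : (n : ℝ) < 1 := by rw [hxn]; exact hx1
    have h0' : (0 : ℤ) < n := by exact_mod_cast h0
    have h1' : (n : ℤ) < 1 := by exact_mod_cast h1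
    omega
  have hgoal_eq : ∀ N : ℕ,
      (∑ n ∈ Finset.range N, t ^ (n + 1) * Real.sin (2 * Real.pi * (↑n + 1) * x) / (↑n + 1))
      = ∑ n ∈ Finset.range N, t ^ (n + 1) * Real.sin ((↑n + 1) * θ) / (↑n + 1) := by
    intro N
    exact Finset.sum_congr rfl fun n _ => by rw [hsin n]
  rcases lt_or_eq_of_le ht1 with ht | ht
  · -- case t < 1
    have habs : |t| < 1 := abs_lt.mpr ⟨by linarith, ht⟩
    have H := hasSum_sin_arctan (θ := θ) habs
    have H1 := H.tendsto_sum_nat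
    have H2 : Tendsto (fun N => ∑ n ∈ Finset.range (N + 1), t ^ n * Real.sin (↑n * θ) / ↑n)
        atTop (nhds (Real.arctan (t * Real.sin θ / (1 - t * Real.cos θ)))) :=
      H1.comp (tendsto_add_atTop_nat 1)
    refine H2.congr fun N => ?_
    rw [← partial_sum_eq, hgoal_eq N]
  · -- case t = 1
    subst ht
    have hwne : Complex.exp (θ * Complex.I) ≠ 1 := by
      intro h
      have := congrArg Complex.re h
      rw [Complex.exp_ofReal_mul_I_re, Complex.one_re] at this
      exact absurd this (ne_of_lt hcosθ)
    obtain ⟨l, hl⟩ := cauchySeq_tendsto_of_complete (cauchy_at_one hwne)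
    -- F n = sin (n θ) / n
    set F : ℕ → ℝ := fun n => Real.sin (n * θ) / n with hF
    have hFsum : Tendsto (fun N => ∑ n ∈ Finset.range N, F n) atTop (nhds l) := by
      refine (tendsto_add_atTop_iff_nat 1).mp ?_
      refine hl.congr fun N => ?_
      rw [show (∑ n ∈ Finset.range N, Real.sin ((↑n + 1) * θ) / (↑n + 1))
          = ∑ n ∈ Finset.range N, (1 : ℝ) ^ (n + 1) * Real.sin ((↑n + 1) * θ) / (↑n + 1) by
        exact Finset.sum_congr rfl fun n _ => by rw [one_pow, one_mul]]
      rw [partial_sum_eq]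
      simp [hF]
    have hAbel := Real.tendsto_tsum_powerSeries_nhdsWithin_lt hFsum
    have hEv : (fun s : ℝ => ∑' n, F n * s ^ n)
        =ᶠ[nhdsWithin 1 (Set.Iio 1)] fun s =>
          Real.arctan (s * Real.sin θ / (1 - s * Real.cos θ)) := by
      have h1 : ∀ᶠ s : ℝ in nhdsWithin 1 (Set.Iio 1), -1 < s :=
        eventually_nhdsWithin_of_eventually_nhds (eventually_gt_nhds (by norm_num))
      have h2 : ∀ᶠ s : ℝ in nhdsWithin 1 (Set.Iio 1), s < 1 :=
        eventually_mem_nhdsWithin.mono fun s hs => hs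
      filter_upwards [h1, h2] with s hs1 hs2
      have habs : |s| < 1 := abs_lt.mpr ⟨hs1, hs2⟩
      have := (hasSum_sin_arctan (θ := θ) habs).tsum_eq
      rw [← this]
      exact tsum_congr fun n => by rw [hF]; ring
    have hcont : Tendsto (fun s : ℝ => Real.arctan (s * Real.sin θ / (1 - s * Real.cos θ)))
        (nhdsWithin 1 (Set.Iio 1))
        (nhds (Real.arctan (1 * Real.sin θ / (1 - 1 * Real.cos θ)))) := by
      have hden : (1 : ℝ) - 1 * Real.cos θ ≠ 0 := by
        rw [one_mul]; intro h; linarith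
      apply Tendsto.mono_left _ nhdsWithin_le_nhds
      exact (Real.continuous_arctan.continuousAt.comp
        ((continuousAt_id.mul continuousAt_const).div
          (continuousAt_const.sub (continuousAt_id.mul continuousAt_const)) hden))
    have hlval : l = Real.arctan (1 * Real.sin θ / (1 - 1 * Real.cos θ)) :=
      tendsto_nhds_unique (hAbel.congr' hEv) hcont
    rw [← hlval]
    refine hl.congr fun N => ?_
    rw [hgoal_eq N]
    exact Finset.sum_congr rfl fun n _ => by rw [one_pow, one_mul]
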